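/- Let n >= 1 be an integer and rho > 0. Define phi(v) = (1+v) * sinh^{2n}( rho (1+v) / 2 ) for v > -1. Then for every u in [-1/2, 1/2], the second derivative satisfies phi''(u) <= phi''(1). -/

import Mathlib

open Real

/-- For `φ(v) = (1+v) sinh^{2n}(ρ(1+v)/2)`, the second derivative satisfies
`φ''(u) ≤ φ''(1)` for all `u ∈ [-1/2, 1/2]`. -/
theorem phi_second_deriv_bound (n : ℕ) (hn : 1 ≤ n) (ρ : ℝ) (hρ : 0 < ρ)
    (φ : ℝ → ℝ) (hφ : ∀ v : ℝ, φ v = (1 + v) * Real.sinh (ρ * (1 + v) / 2) ^ (2 * n)) :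
    ∀ u : ℝ, -(1/2) ≤ u → u ≤ 1/2 →
      iteratedDeriv 2 φ u ≤ iteratedDeriv 2 φ 1 := by
  obtain rfl : φ = fun v => (1 + v) * Real.sinh (ρ * (1 + v) / 2) ^ (2 * n) := funext hφ
  obtain ⟨m, rfl⟩ : ∃ m, n = m + 1 := ⟨n - 1, (Nat.succ_pred_eq_of_pos hn).symm⟩
  set S : ℝ → ℝ := fun v => Real.sinh (ρ * (1 + v) / 2) with hS
  set C : ℝ → ℝ := fun v => Real.cosh (ρ * (1 + v) / 2) with hC
  have hg : ∀ v : ℝ, HasDerivAt (fun v => ρ * (1 + v) / 2) (ρ / 2) v := by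
    intro v
    have := (((hasDerivAt_id v).const_add 1).const_mul ρ).div_const 2
    simpa using this
  have hs : ∀ v : ℝ, HasDerivAt S (C v * (ρ / 2)) v := fun v =>
    (Real.hasDerivAt_sinh _).comp v (hg v)
  have hc : ∀ v : ℝ, HasDerivAt C (S v * (ρ / 2)) v := fun v =>
    (Real.hasDerivAt_cosh _).comp v (hg v)
  set φ1 : ℝ → ℝ := fun v =>
    S v ^ (2 * (m + 1)) +
      (1 + v) * ((2 * (m + 1) : ℕ) * S v ^ (2 * m + 1) * (C v * (ρ / 2))) with hφ1
  have hd1 : ∀ v : ℝ,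
      HasDerivAt (fun v => (1 + v) * S v ^ (2 * (m + 1))) (φ1 v) v := by
    intro v
    have h1 : HasDerivAt (fun v : ℝ => 1 + v) 1 v := (hasDerivAt_id v).const_add 1
    have h2 := (hs v).pow (2 * (m + 1))
    rw [show 2 * (m + 1) - 1 = 2 * m + 1 by omega] at h2
    have := h1.mul h2
    refine this.congr_deriv ?_
    simp only [hφ1, Pi.pow_apply]
    ring
  set F : ℝ → ℝ := fun v =>
    (2 * (m + 1) : ℕ) * S v ^ (2 * m + 1) * (C v * (ρ / 2)) * 2 +
      (1 + v) *
        ((2 * (m + 1) : ℕ) * ((2 * m + 1 : ℕ) * S v ^ (2 * m) * (C v * (ρ / 2))) *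
            (C v * (ρ / 2)) +
          (2 * (m + 1) : ℕ) * S v ^ (2 * m + 1) * (S v * (ρ / 2) * (ρ / 2))) with hF
  have hd2 : ∀ v : ℝ, HasDerivAt φ1 (F v) v := by
    intro v
    have h1 : HasDerivAt (fun v : ℝ => 1 + v) 1 v := (hasDerivAt_id v).const_add 1
    have hpow1 := (hs v).pow (2 * (m + 1))
    rw [show 2 * (m + 1) - 1 = 2 * m + 1 by omega] at hpow1
    have hpow2 := (hs v).pow (2 * m + 1)
    rw [show 2 * m + 1 - 1 = 2 * m by omega] at hpow2
    have hmul : HasDerivAt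
        (fun v => ((2 * (m + 1) : ℕ) : ℝ) * S v ^ (2 * m + 1) * (C v * (ρ / 2)))
        (((2 * (m + 1) : ℕ) * ((2 * m + 1 : ℕ) * S v ^ (2 * m) * (C v * (ρ / 2)))) *
            (C v * (ρ / 2)) +
          ((2 * (m + 1) : ℕ) * S v ^ (2 * m + 1)) * (S v * (ρ / 2) * (ρ / 2))) v := by
      exact (hpow2.const_mul ((2 * (m + 1) : ℕ) : ℝ)).mul ((hc v).mul_const (ρ / 2))
    have h := hpow1.add (h1.mul hmul)
    have heq : φ1 = fun v =>
        S v ^ (2 * (m + 1)) +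
          (1 + v) * (((2 * (m + 1) : ℕ) : ℝ) * S v ^ (2 * m + 1) * (C v * (ρ / 2))) := hφ1
    rw [heq]
    refine h.congr_deriv ?_
    simp only [hF]
    push_cast
    ring
  have key : iteratedDeriv 2 (fun v => (1 + v) * S v ^ (2 * (m + 1))) = F := by
    have e1 : deriv (fun v => (1 + v) * S v ^ (2 * (m + 1))) = φ1 :=
      funext fun v => (hd1 v).deriv
    have e2 : deriv φ1 = F := funext fun v => (hd2 v).deriv
    rw [show (2 : ℕ) = 1 + 1 from rfl, iteratedDeriv_succ, iteratedDeriv_one, e1, e2]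
  intro u hu1 hu2
  rw [key]
  -- monotonicity of F
  have harg : (0 : ℝ) ≤ ρ * (1 + u) / 2 := by nlinarith
  have harg1 : ρ * (1 + u) / 2 ≤ ρ * (1 + 1) / 2 := by nlinarith
  have hSu0 : 0 ≤ S u := Real.sinh_nonneg_iff.mpr harg
  have hSle : S u ≤ S 1 := by
    simp only [hS]
    rw [Real.sinh_le_sinh]
    exact harg1
  have hCu0 : 0 ≤ C u := (Real.cosh_pos _).le
  have hC1 : 0 ≤ C 1 := (Real.cosh_pos _).le
  have hCle : C u ≤ C 1 := by
    simp only [hC]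
    rw [Real.cosh_le_cosh, abs_of_nonneg harg, abs_of_nonneg (by nlinarith)]
    exact harg1
  have hv0 : (0 : ℝ) ≤ 1 + u := by linarith
  have hvle : (1 : ℝ) + u ≤ 1 + 1 := by linarith
  simp only [hF]
  gcongr
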